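/- Let L ⊆ ℤⁿ be a lattice. The following are equivalent: (1) L contains a nonzero pure element (i.e., a nonzero a ∈ L with a ≥ 0 or −a ≥ 0 componentwise, equivalently L ∩ ℕⁿ ≠ {0}); (2) every I_L-fiber is infinite; (3) some I_L-fiber is infinite. -/

import Mathlib

open MvPolynomial

noncomputable section

/-- The integer vector associated to a natural exponent vector. -/
def natVec {ι : Type*} (u : ι →₀ ℕ) : ι → ℤ := fun i => (u i : ℤ)

/-- The lattice ideal `I_L` of a lattice `L ⊆ ℤ^ι` in `k[x_i : i ∈ ι]`. -/
def latticeIdeal (k : Type*) [Field k] {ι : Type*} (L : Submodule ℤ (ι → ℤ)) :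
    Ideal (MvPolynomial ι k) :=
  Ideal.span {f | ∃ u v : ι →₀ ℕ, natVec u - natVec v ∈ L ∧
    f = monomial u (1 : k) - monomial v 1}

/-- `f` is a binomial `x^u - x^v` belonging to the lattice ideal `I_L`. -/
def IsLatticeBinomial (k : Type*) [Field k] {ι : Type*} (L : Submodule ℤ (ι → ℤ))
    (f : MvPolynomial ι k) : Prop :=
  ∃ u v : ι →₀ ℕ, natVec u - natVec v ∈ L ∧ f = monomial u (1 : k) - monomial v 1

/-- The `I_L`-fiber of `u` : all exponent vectors `v` with `v - u ∈ L`. -/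
def fiber {ι : Type*} (L : Submodule ℤ (ι → ℤ)) (u : ι →₀ ℕ) : Set (ι →₀ ℕ) :=
  {v | natVec v - natVec u ∈ L}

/-- `L⁺ = L ∩ ℕ^ι`. -/
def Lplus {ι : Type*} (L : Submodule ℤ (ι → ℤ)) : Set (ι → ℤ) :=
  {w | w ∈ L ∧ ∀ i, 0 ≤ w i}

/-- `L_pure`, the subgroup of `L` generated by `L⁺`. -/
def Lpure {ι : Type*} (L : Submodule ℤ (ι → ℤ)) : Submodule ℤ (ι → ℤ) :=
  Submodule.span ℤ (Lplus L)

/-- `σ_L`, the union of the supports of elements of `L⁺`. -/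
def sigmaL {ι : Type*} (L : Submodule ℤ (ι → ℤ)) : Set ι :=
  {i | ∃ w ∈ Lplus L, w i ≠ 0}

/-- `F̄ ≤_I Ḡ` : some translate of `F` is contained in `G`. -/
def fiberLE {ι : Type*} (F G : Set (ι →₀ ℕ)) : Prop :=
  ∃ t : ι →₀ ℕ, (fun v => t + v) '' F ⊆ G

/-- `F ≡_I G` : equivalence of fibers. -/
def fiberEquiv {ι : Type*} (F G : Set (ι →₀ ℕ)) : Prop :=
  fiberLE F G ∧ fiberLE G F

/-- `F̄ <_I Ḡ`. -/
def fiberLT {ι : Type*} (F G : Set (ι →₀ ℕ)) : Prop :=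
  fiberLE F G ∧ ¬ fiberEquiv F G

/-- The ideal `I_{<F̄}` generated by binomials of `I_L` whose fiber class is `<_I F̄`. -/
def idealLT (k : Type*) [Field k] {ι : Type*} (L : Submodule ℤ (ι → ℤ))
    (F : Set (ι →₀ ℕ)) : Ideal (MvPolynomial ι k) :=
  Ideal.span {f | ∃ u v : ι →₀ ℕ, natVec u - natVec v ∈ L ∧
    f = monomial u (1 : k) - monomial v 1 ∧ fiberLT (fiber L u) F}

/-- The ideal `I_{≤F̄}` generated by binomials of `I_L` whose fiber class is `≤_I F̄`. -/
def idealLE (k : Type*) [Field k] {ι : Type*} (L : Submodule ℤ (ι → ℤ))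
    (F : Set (ι →₀ ℕ)) : Ideal (MvPolynomial ι k) :=
  Ideal.span {f | ∃ u v : ι →₀ ℕ, natVec u - natVec v ∈ L ∧
    f = monomial u (1 : k) - monomial v 1 ∧ fiberLE (fiber L u) F}

/-- `μ(I_L)` : the least cardinality of a binomial generating set of `I_L`. -/
def muIdeal (k : Type*) [Field k] {ι : Type*} (L : Submodule ℤ (ι → ℤ)) : ℕ :=
  sInf {m | ∃ S : Finset (MvPolynomial ι k), S.card = m ∧
    (∀ f ∈ S, IsLatticeBinomial k L f) ∧
    Ideal.span (S : Set (MvPolynomial ι k)) = latticeIdeal k L}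

/-- A Markov basis of `I_L` : a binomial generating set of least cardinality `μ(I_L)`. -/
def IsMarkovBasis (k : Type*) [Field k] {ι : Type*} (L : Submodule ℤ (ι → ℤ))
    (S : Finset (MvPolynomial ι k)) : Prop :=
  (∀ f ∈ S, IsLatticeBinomial k L f) ∧
  Ideal.span (S : Set (MvPolynomial ι k)) = latticeIdeal k L ∧
  S.card = muIdeal k L

/-- `u` is an `L`-primitive vector : `u ≠ 0`, `u ∈ L`, and whenever `q • u ∈ L` for
a rational `q`, then `q` is an integer. -/
def IsLPrimitive {ι : Type*} (L : Submodule ℤ (ι → ℤ)) (u : ι → ℤ) : Prop :=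
  u ≠ 0 ∧ u ∈ L ∧ ∀ (q : ℚ) (w : ι → ℤ), w ∈ L →
    (∀ i, (w i : ℚ) = q * (u i : ℚ)) → ∃ m : ℤ, q = (m : ℚ)

/-- Projection onto the coordinates in `σ_L`. -/
def projSigma {n : ℕ} (L : Submodule ℤ (Fin n → ℤ)) :
    (Fin n → ℤ) →ₗ[ℤ] ({i : Fin n // i ∈ sigmaL L} → ℤ) :=
  LinearMap.pi fun j => LinearMap.proj j.1

/-- Projection onto the coordinates outside `σ_L` (giving `u ↦ u^σ`). -/
def projCompl {n : ℕ} (L : Submodule ℤ (Fin n → ℤ)) :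
    (Fin n → ℤ) →ₗ[ℤ] ({i : Fin n // i ∉ sigmaL L} → ℤ) :=
  LinearMap.pi fun j => LinearMap.proj j.1

/-- An indispensable binomial: it appears, up to a constant multiple, in every Markov basis. -/
def IsIndispensableBinomial (k : Type*) [Field k] {ι : Type*} (L : Submodule ℤ (ι → ℤ))
    (f : MvPolynomial ι k) : Prop :=
  ∀ S : Finset (MvPolynomial ι k), IsMarkovBasis k L S → ∃ c : k, c ≠ 0 ∧ c • f ∈ S

/-- An indispensable monomial: every Markov basis contains a binomial having it as a term. -/
def IsIndispensableMonomial (k : Type*) [Field k] {ι : Type*} (L : Submodule ℤ (ι → ℤ))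
    (u : ι →₀ ℕ) : Prop :=
  ∀ S : Finset (MvPolynomial ι k), IsMarkovBasis k L S → ∃ f ∈ S, ∃ v : ι →₀ ℕ,
    f = monomial u (1 : k) - monomial v 1 ∨ f = monomial v (1 : k) - monomial u 1

lemma infinite_of_pos {n : ℕ} (L : Submodule ℤ (Fin n → ℤ))
    (h : ∃ a ∈ L, a ≠ 0 ∧ ∀ i, 0 ≤ a i) (u : Fin n →₀ ℕ) : (fiber L u).Infinite := by
  obtain ⟨a, haL, ha0, hapos⟩ := h
  set b : Fin n →₀ ℕ := Finsupp.equivFunOnFinite.symm (fun i => (a i).toNat) with hb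
  have hba : ∀ i, ((b i : ℤ)) = a i := by
    intro i
    show ((a i).toNat : ℤ) = a i; exact Int.toNat_of_nonneg (hapos i)
  obtain ⟨i0, hi0⟩ : ∃ i, a i ≠ 0 := by
    by_contra hc
    push_neg at hc
    exact ha0 (funext hc)
  have hbi0 : b i0 ≠ 0 := by
    intro hc
    apply hi0
    rw [← hba i0, hc]; rfl
  apply Set.infinite_of_injective_forall_mem (f := fun m : ℕ => u + m • b)
  case hi =>
    intro m m' hmm'
    have := congrArg (fun v : Fin n →₀ ℕ => v i0) hmm'
    simp only [Finsupp.add_apply, Finsupp.smul_apply, smul_eq_mul] at this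
    exact Nat.eq_of_mul_eq_mul_right (Nat.pos_of_ne_zero hbi0) (by omega)
  case hf =>
    intro m
    show natVec (u + m • b) - natVec u ∈ L
    have : natVec (u + m • b) - natVec u = (m : ℤ) • a := by
      funext i
      simp only [natVec, Finsupp.add_apply, Finsupp.smul_apply, smul_eq_mul, Pi.sub_apply,
        Pi.smul_apply]
      push_cast
      rw [hba i]; ring
    rw [this]
    exact L.smul_mem _ haL

lemma pos_of_infinite {n : ℕ} (L : Submodule ℤ (Fin n → ℤ)) (u : Fin n →₀ ℕ)
    (h : (fiber L u).Infinite) : ∃ a ∈ L, a ≠ 0 ∧ ∀ i, 0 ≤ a i := by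
  have f := h.natEmbedding _
  set g : ℕ → (Fin n →₀ ℕ) := fun m => (f m).1 with hg
  have hgmem : ∀ m, g m ∈ fiber L u := fun m => (f m).2
  obtain ⟨φ, hφ⟩ := (Set.isPWO_of_wellQuasiOrderedLE (fiber L u)).exists_monotone_subseq (f := g) hgmem
  have hle : g (φ 0) ≤ g (φ 1) := hφ (by norm_num)
  have hne : g (φ 0) ≠ g (φ 1) := by
    intro hc
    have : φ 0 = φ 1 := f.injective (Subtype.ext hc)
    exact absurd (φ.injective this) (by norm_num)
  refine ⟨natVec (g (φ 1)) - natVec (g (φ 0)), ?_, ?_, ?_⟩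
  · have h1 := hgmem (φ 1)
    have h0 := hgmem (φ 0)
    have := L.sub_mem h1 h0
    simpa using this
  · intro hc
    apply hne
    ext i
    have := congrFun hc i
    simp only [Pi.sub_apply, natVec, Pi.zero_apply, sub_eq_zero] at this
    exact_mod_cast this.symm
  · intro i
    simp only [Pi.sub_apply, natVec, sub_nonneg]
    exact_mod_cast Finsupp.le_def.1 hle i

/-- `L` contains a nonzero pure element iff every `I_L`-fiber is infinite,
iff some `I_L`-fiber is infinite. -/
theorem stmt1 {n : ℕ} (L : Submodule ℤ (Fin n → ℤ)) :
    ((∃ a ∈ L, a ≠ 0 ∧ ((∀ i, 0 ≤ a i) ∨ (∀ i, a i ≤ 0))) ↔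
      ∀ u : Fin n →₀ ℕ, (fiber L u).Infinite) ∧
    ((∀ u : Fin n →₀ ℕ, (fiber L u).Infinite) ↔ ∃ u : Fin n →₀ ℕ, (fiber L u).Infinite) := by
  have key : (∃ a ∈ L, a ≠ 0 ∧ ((∀ i, 0 ≤ a i) ∨ (∀ i, a i ≤ 0))) →
      ∃ a ∈ L, a ≠ 0 ∧ ∀ i, 0 ≤ a i := by
    rintro ⟨a, haL, ha0, hp | hn⟩
    · exact ⟨a, haL, ha0, hp⟩
    · refine ⟨-a, L.neg_mem haL, by simpa using ha0, fun i => by simpa using hn i⟩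
  constructor
  · constructor
    · intro h u
      exact infinite_of_pos L (key h) u
    · intro h
      obtain ⟨a, haL, ha0, hpos⟩ := pos_of_infinite L 0 (h 0)
      exact ⟨a, haL, ha0, Or.inl hpos⟩
  · constructor
    · intro h
      exact ⟨0, h 0⟩
    · rintro ⟨u, hu⟩ v
      exact infinite_of_pos L (pos_of_infinite L u hu) v
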